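/- Let G be a 3P_1-free graph (G has no independent set of size 3) and let (s_1,t_1), …, (s_k,t_k) be terminal pairs with all 2k terminal vertices distinct. If G has pairwise vertex-disjoint paths P^1, …, P^k with P^i an s_i–t_i path, then G has such paths in which every path has at most 4 vertices. -/

import Mathlib

open SimpleGraph

lemma triple_adj' {V : Type*} {G : SimpleGraph V}
    (hfree : IsEmpty ((⊥ : SimpleGraph (Fin 3)) ↪g G))
    {x y z : V} (hxy : x ≠ y) (hxz : x ≠ z) (hyz : y ≠ z) :
    G.Adj x y ∨ G.Adj x z ∨ G.Adj y z := by
  by_contra hc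
  push_neg at hc
  obtain ⟨h1, h2, h3⟩ := hc
  have h1' : ¬ G.Adj y x := fun h => h1 h.symm
  have h2' : ¬ G.Adj z x := fun h => h2 h.symm
  have h3' : ¬ G.Adj z y := fun h => h3 h.symm
  refine hfree.false ⟨⟨![x,y,z], ?_⟩, ?_⟩
  · intro i j hij
    fin_cases i <;> fin_cases j <;> simp_all
  · intro i j
    simp only [SimpleGraph.bot_adj, iff_false]
    show ¬ G.Adj (![x,y,z] i) (![x,y,z] j)
    fin_cases i <;> fin_cases j <;>
      simp_all [G.irrefl]

lemma chord_shorten' {V : Type*} {G : SimpleGraph V}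
    (hfree : IsEmpty ((⊥ : SimpleGraph (Fin 3)) ↪g G))
    {a b : V} (P : G.Walk a b) (hP : P.IsPath) (h4 : 4 ≤ P.length) :
    ∃ R : G.Walk a b, R.length < P.length ∧ R.support ⊆ P.support := by
  match P with
  | .nil => simp at h4
  | .cons (v := v1) h1 (.nil) => simp [Walk.length_cons] at h4
  | .cons (v := v1) h1 (.cons (v := v2) h2 .nil) => simp [Walk.length_cons] at h4
  | .cons (v := v1) h1 (.cons (v := v2) h2 (.cons (v := v3) h3 .nil)) =>
      simp [Walk.length_cons] at h4
  | .cons (v := v1) h1 (.cons (v := v2) h2 (.cons (v := v3) h3 (.cons (v := v4) h4' P4))) =>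
      have hnd := hP.support_nodup
      simp only [Walk.support_cons, List.nodup_cons, List.mem_cons] at hnd
      push_neg at hnd
      have hv4 : v4 ∈ P4.support := P4.start_mem_support
      have hav2 : a ≠ v2 := hnd.1.2.1
      have hav4 : a ≠ v4 := fun h => hnd.1.2.2.2 (h ▸ hv4)
      have hv2v4 : v2 ≠ v4 := fun h => hnd.2.2.1.2 (h ▸ hv4)
      rcases triple_adj' hfree hav2 hav4 hv2v4 with hc | hc | hc
      · refine ⟨.cons hc (.cons h3 (.cons h4' P4)), ?_, ?_⟩
        · simp only [Walk.length_cons]; omega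
        · intro x hx; simp [Walk.support_cons] at hx ⊢; tauto
      · refine ⟨.cons hc P4, ?_, ?_⟩
        · simp only [Walk.length_cons]; omega
        · intro x hx; simp [Walk.support_cons] at hx ⊢; tauto
      · refine ⟨.cons h1 (.cons h2 (.cons hc P4)), ?_, ?_⟩
        · simp only [Walk.length_cons]; omega
        · intro x hx; simp [Walk.support_cons] at hx ⊢; tauto

lemma shorten' {V : Type*} {G : SimpleGraph V}
    (hfree : IsEmpty ((⊥ : SimpleGraph (Fin 3)) ↪g G)) [DecidableEq V] :
    ∀ (n : ℕ) {a b : V} (Q : G.Walk a b), Q.length ≤ n →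
      ∃ R : G.Walk a b, R.IsPath ∧ R.support ⊆ Q.support ∧ R.support.length ≤ 4 := by
  intro n
  induction n with
  | zero =>
      intro a b Q hQ
      refine ⟨Q.bypass, Q.bypass_isPath, Q.support_bypass_subset, ?_⟩
      have := Q.length_bypass_le
      rw [Walk.length_support]; omega
  | succ n ih =>
      intro a b Q hQ
      by_cases hlen : Q.bypass.length ≤ 3
      · refine ⟨Q.bypass, Q.bypass_isPath, Q.support_bypass_subset, ?_⟩
        rw [Walk.length_support]; omega
      · obtain ⟨R, hR1, hR2⟩ := chord_shorten' hfree Q.bypass Q.bypass_isPath (by omega)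
        have hle : R.length ≤ n := by
          have := Q.length_bypass_le; omega
        obtain ⟨S, hS1, hS2, hS3⟩ := ih R hle
        exact ⟨S, hS1, fun x hx => Q.support_bypass_subset (hR2 (hS2 hx)), hS3⟩

/-- A solution of Disjoint Paths: pairwise vertex-disjoint paths `P¹, …, Pᵏ` such that
`Pⁱ` is an `s i`–`t i` path. -/
def HasDisjointPaths {V : Type*} (G : SimpleGraph V) {k : ℕ} (s t : Fin k → V) : Prop :=
  ∃ P : (i : Fin k) → G.Walk (s i) (t i),
    (∀ i, (P i).IsPath) ∧
      Pairwise fun i j => ((P i).support).Disjoint ((P j).support)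

/-- In a `3P₁`-free graph (no independent set of size 3), if a Disjoint Paths instance
has a solution, then it has a solution in which every path has at most `4` vertices. -/
theorem stmt_11 {V : Type*} [Fintype V] (G : SimpleGraph V)
    (hfree : IsEmpty ((⊥ : SimpleGraph (Fin 3)) ↪g G))
    (k : ℕ) (s t : Fin k → V)
    (hinj : Function.Injective (Sum.elim s t))
    (h : HasDisjointPaths G s t) :
    ∃ P : (i : Fin k) → G.Walk (s i) (t i),
      (∀ i, (P i).IsPath) ∧
      (Pairwise fun i j => ((P i).support).Disjoint ((P j).support)) ∧
      ∀ i, (P i).support.length ≤ 4 := by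
  classical
  obtain ⟨P, hP, hdis⟩ := h
  choose Q hQ1 hQ2 hQ3 using fun i => shorten' hfree ((P i).length) (P i) le_rfl
  refine ⟨Q, hQ1, fun i j hij => ?_, hQ3⟩
  exact List.disjoint_of_subset_left (hQ2 i)
    (List.disjoint_of_subset_right (hQ2 j) (hdis hij))
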